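/- Let H be a Lie group (or Lie algebra h) and ω a nondegenerate left-invariant closed 2-form on H, i.e., a nondegenerate 2-cocycle ω ∈ Λ²h* satisfying ω([x,y],z) + ω([y,z],x) + ω([z,x],y) = 0. Then r := ω^{−1} ∈ Λ²h (the inverse of ω regarded as an isomorphism h → h*) satisfies the classical Yang–Baxter equation [r₁₂, r₁₃] + [r₁₂, r₂₃] + [r₁₃, r₂₃] = 0. -/

import Mathlib

open TensorProduct

namespace Stmt7

attribute [local instance 100] LieRing.ofAssociativeRing

variable (g : Type*) [LieRing g] [LieAlgebra ℂ g]

/-- `U(g) ⊗ U(g) ⊗ U(g)`. -/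
noncomputable abbrev U3 :=
  UniversalEnvelopingAlgebra ℂ g ⊗[ℂ] (UniversalEnvelopingAlgebra ℂ g ⊗[ℂ]
    UniversalEnvelopingAlgebra ℂ g)

variable {g}

/-- `x ↦ ι(x) ⊗ 1 ⊗ 1 : g → U(g)^{⊗3}`. -/
noncomputable def j1 : g →ₗ[ℂ] U3 g :=
  (TensorProduct.mk ℂ (UniversalEnvelopingAlgebra ℂ g) _).flip (1 ⊗ₜ 1) ∘ₗ
    (UniversalEnvelopingAlgebra.ι ℂ : g →ₗ⁅ℂ⁆ _).toLinearMap

/-- `x ↦ 1 ⊗ ι(x) ⊗ 1 : g → U(g)^{⊗3}`. -/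
noncomputable def j2 : g →ₗ[ℂ] U3 g :=
  TensorProduct.mk ℂ (UniversalEnvelopingAlgebra ℂ g) _ 1 ∘ₗ
    (TensorProduct.mk ℂ (UniversalEnvelopingAlgebra ℂ g) _).flip 1 ∘ₗ
      (UniversalEnvelopingAlgebra.ι ℂ : g →ₗ⁅ℂ⁆ _).toLinearMap

/-- `x ↦ 1 ⊗ 1 ⊗ ι(x) : g → U(g)^{⊗3}`. -/
noncomputable def j3 : g →ₗ[ℂ] U3 g :=
  TensorProduct.mk ℂ (UniversalEnvelopingAlgebra ℂ g) _ 1 ∘ₗ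
    TensorProduct.mk ℂ (UniversalEnvelopingAlgebra ℂ g) _ 1 ∘ₗ
      (UniversalEnvelopingAlgebra.ι ℂ : g →ₗ⁅ℂ⁆ _).toLinearMap

/-- The linear map `g ⊗ g → U(g)^{⊗3}` sending `x ⊗ y ↦ f(x) * f'(y)`. -/
noncomputable def legMap (f f' : g →ₗ[ℂ] U3 g) : g ⊗[ℂ] g →ₗ[ℂ] U3 g :=
  TensorProduct.lift ((LinearMap.mul ℂ (U3 g)).compl₁₂ f f')

/-- `r₁₂ ∈ U(g)^{⊗3}` for `r ∈ g ⊗ g`. -/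
noncomputable def r12 (r : g ⊗[ℂ] g) : U3 g := legMap j1 j2 r

/-- `r₁₃ ∈ U(g)^{⊗3}` for `r ∈ g ⊗ g`. -/
noncomputable def r13 (r : g ⊗[ℂ] g) : U3 g := legMap j1 j3 r

/-- `r₂₃ ∈ U(g)^{⊗3}` for `r ∈ g ⊗ g`. -/
noncomputable def r23 (r : g ⊗[ℂ] g) : U3 g := legMap j2 j3 r

/-- The classical Yang–Baxter equation, stated in `U(g)^{⊗3}`. -/
def CYBE (r : g ⊗[ℂ] g) : Prop :=
  ⁅r12 r, r13 r⁆ + ⁅r12 r, r23 r⁆ + ⁅r13 r, r23 r⁆ = 0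

/-- The linear map `g* → g` induced by `r ∈ g ⊗ g`, `ξ ↦ (ξ ⊗ id)(r)`. -/
noncomputable def rTilde (r : g ⊗[ℂ] g) (ξ : Module.Dual ℂ g) : g :=
  TensorProduct.lid ℂ g (TensorProduct.map ξ LinearMap.id r)


/-! ### Auxiliary material for the proof -/

section Aux

open Finset

private lemma sum_lie' {L : Type*} [LieRing L] {α : Type*} (s : Finset α) (f : α → L) (x : L) :
    ⁅∑ i ∈ s, f i, x⁆ = ∑ i ∈ s, ⁅f i, x⁆ := by
  classical
  induction s using Finset.induction_on with
  | empty => simp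
  | @insert a s ha ih => rw [Finset.sum_insert ha, Finset.sum_insert ha, add_lie, ih]

private lemma lie_sum' {L : Type*} [LieRing L] {α : Type*} (s : Finset α) (f : α → L) (x : L) :
    ⁅x, ∑ i ∈ s, f i⁆ = ∑ i ∈ s, ⁅x, f i⁆ := by
  classical
  induction s using Finset.induction_on with
  | empty => simp
  | @insert a s ha ih => rw [Finset.sum_insert ha, Finset.sum_insert ha, lie_add, ih]

private lemma ring_sum_lie {A : Type*} [Ring A] {α : Type*} (s : Finset α) (f : α → A) (x : A) :
    ⁅∑ i ∈ s, f i, x⁆ = ∑ i ∈ s, ⁅f i, x⁆ := by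
  simp [Ring.lie_def, Finset.sum_mul, Finset.mul_sum, Finset.sum_sub_distrib]

private lemma ring_lie_sum {A : Type*} [Ring A] {α : Type*} (s : Finset α) (f : α → A) (x : A) :
    ⁅x, ∑ i ∈ s, f i⁆ = ∑ i ∈ s, ⁅x, f i⁆ := by
  simp [Ring.lie_def, Finset.sum_mul, Finset.mul_sum, Finset.sum_sub_distrib]

variable {h : Type*} [LieRing h] [LieAlgebra ℂ h]

/-- `ι : h →ₗ U(h)` as a plain linear map. -/
noncomputable def iU : h →ₗ[ℂ] UniversalEnvelopingAlgebra ℂ h :=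
  (UniversalEnvelopingAlgebra.ι ℂ : h →ₗ⁅ℂ⁆ _).toLinearMap

lemma iU_lie (a c : h) : iU ⁅a, c⁆ = iU a * iU c - iU c * iU a := by
  have := (UniversalEnvelopingAlgebra.ι ℂ (L := h)).map_lie a c
  rw [Ring.lie_def] at this
  exact this

lemma rTilde_tmul (a c : h) (ξ : Module.Dual ℂ h) :
    rTilde (a ⊗ₜ[ℂ] c) ξ = ξ a • c := by
  simp [rTilde]

lemma rTilde_neg (t : h ⊗[ℂ] h) (ξ : Module.Dual ℂ h) :
    rTilde (-t) ξ = - rTilde t ξ := by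
  simp [rTilde]

lemma rTilde_add (s t : h ⊗[ℂ] h) (ξ : Module.Dual ℂ h) :
    rTilde (s + t) ξ = rTilde s ξ + rTilde t ξ := by
  simp [rTilde]

lemma rTilde_sum {α : Type*} (s : Finset α) (u w : α → h) (ξ : Module.Dual ℂ h) :
    rTilde (∑ i ∈ s, u i ⊗ₜ[ℂ] w i) ξ = ∑ i ∈ s, ξ (u i) • w i := by
  simp [rTilde, map_sum]

/-- Expansion of an arbitrary element of `h ⊗ h` along a finite basis. -/
lemma expand {α : Type*} [Fintype α] (bb : Module.Basis α ℂ h) (t : h ⊗[ℂ] h) :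
    t = ∑ i, bb i ⊗ₜ[ℂ] rTilde t (bb.coord i) := by
  induction t using TensorProduct.induction_on with
  | zero => simp [rTilde]
  | tmul a c =>
    have : ∀ i, rTilde (a ⊗ₜ[ℂ] c) (bb.coord i) = bb.repr a i • c := by
      intro i; rw [rTilde_tmul, Module.Basis.coord_apply]
    rw [Finset.sum_congr rfl fun i _ => by rw [this i]]
    calc a ⊗ₜ[ℂ] c = (∑ i, bb.repr a i • bb i) ⊗ₜ[ℂ] c := by rw [Module.Basis.sum_repr]
      _ = ∑ i, bb i ⊗ₜ[ℂ] (bb.repr a i • c) := by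
          rw [TensorProduct.sum_tmul]
          exact Finset.sum_congr rfl fun i _ => by
            rw [TensorProduct.smul_tmul, TensorProduct.tmul_smul]
  | add s t hs ht =>
    conv_lhs => rw [hs, ht]
    rw [← Finset.sum_add_distrib]
    exact Finset.sum_congr rfl fun i _ => by
      rw [rTilde_add, TensorProduct.tmul_add]

lemma j1_apply (x : h) :
    j1 x = iU x ⊗ₜ[ℂ] ((1 : UniversalEnvelopingAlgebra ℂ h) ⊗ₜ[ℂ]
      (1 : UniversalEnvelopingAlgebra ℂ h)) := rfl

lemma j2_apply (x : h) :
    j2 x = (1 : UniversalEnvelopingAlgebra ℂ h) ⊗ₜ[ℂ]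
      (iU x ⊗ₜ[ℂ] (1 : UniversalEnvelopingAlgebra ℂ h)) := rfl

lemma j3_apply (x : h) :
    j3 x = (1 : UniversalEnvelopingAlgebra ℂ h) ⊗ₜ[ℂ]
      ((1 : UniversalEnvelopingAlgebra ℂ h) ⊗ₜ[ℂ] iU x) := rfl

lemma legMap_tmul (f f' : h →ₗ[ℂ] U3 h) (u w : h) :
    legMap f f' (u ⊗ₜ[ℂ] w) = f u * f' w := by
  simp [legMap]

lemma lie12_13 (a b c d : h) :
    ⁅(iU a ⊗ₜ[ℂ] (iU b ⊗ₜ[ℂ] (1 : UniversalEnvelopingAlgebra ℂ h)) : U3 h),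
      iU c ⊗ₜ[ℂ] ((1 : UniversalEnvelopingAlgebra ℂ h) ⊗ₜ[ℂ] iU d)⁆
      = iU ⁅a, c⁆ ⊗ₜ[ℂ] (iU b ⊗ₜ[ℂ] iU d) := by
  rw [Ring.lie_def, iU_lie]
  simp [Algebra.TensorProduct.tmul_mul_tmul, TensorProduct.sub_tmul, TensorProduct.tmul_sub]

lemma lie12_23 (a b c d : h) :
    ⁅(iU a ⊗ₜ[ℂ] (iU b ⊗ₜ[ℂ] (1 : UniversalEnvelopingAlgebra ℂ h)) : U3 h),
      (1 : UniversalEnvelopingAlgebra ℂ h) ⊗ₜ[ℂ] (iU c ⊗ₜ[ℂ] iU d)⁆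
      = iU a ⊗ₜ[ℂ] (iU ⁅b, c⁆ ⊗ₜ[ℂ] iU d) := by
  rw [Ring.lie_def, iU_lie]
  simp [Algebra.TensorProduct.tmul_mul_tmul, TensorProduct.sub_tmul, TensorProduct.tmul_sub]

lemma lie13_23 (a b c d : h) :
    ⁅(iU a ⊗ₜ[ℂ] ((1 : UniversalEnvelopingAlgebra ℂ h) ⊗ₜ[ℂ] iU b) : U3 h),
      (1 : UniversalEnvelopingAlgebra ℂ h) ⊗ₜ[ℂ] (iU c ⊗ₜ[ℂ] iU d)⁆
      = iU a ⊗ₜ[ℂ] (iU c ⊗ₜ[ℂ] iU ⁅b, d⁆) := by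
  rw [Ring.lie_def, iU_lie]
  simp [Algebra.TensorProduct.tmul_mul_tmul, TensorProduct.sub_tmul, TensorProduct.tmul_sub]

/-- The scalar pairing `h ⊗ h ⊗ h → ℂ` induced by three linear functionals. -/
noncomputable def Phi (ξ η ζ : Module.Dual ℂ h) : h ⊗[ℂ] (h ⊗[ℂ] h) →ₗ[ℂ] ℂ :=
  TensorProduct.lift (((LinearMap.mul ℂ ℂ).comp ξ).compl₂
    (TensorProduct.lift (((LinearMap.mul ℂ ℂ).comp η).compl₂ ζ)))

lemma Phi_tmul (ξ η ζ : Module.Dual ℂ h) (a c d : h) :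
    Phi ξ η ζ (a ⊗ₜ[ℂ] (c ⊗ₜ[ℂ] d)) = ξ a * (η c * ζ d) := by
  simp [Phi]

private lemma sep_aux {α : Type*} [Fintype α] [DecidableEq α] (bb : Module.Basis α ℂ h)
    (t : h ⊗[ℂ] (h ⊗[ℂ] h)) (i j k : α) :
    (bb.tensorProduct (bb.tensorProduct bb)).repr t (i, j, k)
      = Phi (bb.coord i) (bb.coord j) (bb.coord k) t := by
  induction t using TensorProduct.induction_on with
  | zero => simp
  | tmul a s =>
    induction s using TensorProduct.induction_on with
    | zero => simp [TensorProduct.tmul_zero]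
    | tmul c d =>
      rw [Phi_tmul]
      rw [Module.Basis.tensorProduct_repr_tmul_apply, Module.Basis.tensorProduct_repr_tmul_apply]
      simp only [Module.Basis.coord_apply, smul_eq_mul]
      ring
    | add s1 s2 h1 h2 =>
      rw [TensorProduct.tmul_add, map_add, map_add, Finsupp.add_apply, h1, h2]
  | add t1 t2 h1 h2 =>
    rw [map_add, map_add, Finsupp.add_apply, h1, h2]

/-- Separation of points in `h ⊗ h ⊗ h` by triples of linear functionals. -/
lemma sep [Module.Finite ℂ h] (t : h ⊗[ℂ] (h ⊗[ℂ] h))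
    (ht : ∀ ξ η ζ : Module.Dual ℂ h, Phi ξ η ζ t = 0) : t = 0 := by
  classical
  let bb := Module.Free.chooseBasis ℂ h
  apply (bb.tensorProduct (bb.tensorProduct bb)).ext_elem
  rintro ⟨i, j, k⟩
  rw [sep_aux bb t i j k, ht, map_zero, Finsupp.zero_apply]

end Aux

/-- Let `h` be a (finite-dimensional) Lie algebra and `ω ∈ Λ²h*` a
nondegenerate left-invariant 2-form, i.e. a skew bilinear form satisfying the 2-cocycle
condition `ω([x,y],z) + ω([y,z],x) + ω([z,x],y) = 0`. Then `r := ω⁻¹ ∈ Λ²h` (the element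
of `Λ²h` corresponding to the inverse of the isomorphism `h → h*` induced by `ω`)
satisfies the classical Yang–Baxter equation
`[r₁₂, r₁₃] + [r₁₂, r₂₃] + [r₁₃, r₂₃] = 0`. -/
theorem stmt7 {h : Type*} [LieRing h] [LieAlgebra ℂ h] [Module.Finite ℂ h]
    (ω : h →ₗ[ℂ] h →ₗ[ℂ] ℂ)
    (hskewω : ∀ x y : h, ω x y = -ω y x)
    (hcocycle : ∀ x y z : h, ω ⁅x, y⁆ z + ω ⁅y, z⁆ x + ω ⁅z, x⁆ y = 0)
    (r : h ⊗[ℂ] h) (hskewr : TensorProduct.comm ℂ h h r = -r)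
    (hinv₁ : ∀ x : h, rTilde r (ω x) = x)
    (hinv₂ : ∀ ξ : Module.Dual ℂ h, ω (rTilde r ξ) = ξ) :
    CYBE r := by
  classical
  unfold CYBE
  set bb := Module.Free.chooseBasis ℂ h with hbb
  set e : _ → h := ⇑bb with he
  set v : _ → h := fun i => rTilde r (bb.coord i) with hv
  have hr : r = ∑ i, e i ⊗ₜ[ℂ] v i := expand bb r
  -- the two contraction identities coming from `r = ω⁻¹`
  have h1 : ∀ x : h, ∑ i, ω x (e i) • v i = x := by
    intro x
    calc ∑ i, ω x (e i) • v i = rTilde (∑ i, e i ⊗ₜ[ℂ] v i) (ω x) :=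
          (rTilde_sum _ _ _ _).symm
      _ = rTilde r (ω x) := by rw [← hr]
      _ = x := hinv₁ x
  have hcomm : (TensorProduct.comm ℂ h h) r = ∑ i, v i ⊗ₜ[ℂ] e i := by
    conv_lhs => rw [hr]
    rw [map_sum]
    exact Finset.sum_congr rfl fun i _ => TensorProduct.comm_tmul ℂ h h _ _
  have h2 : ∀ x : h, ∑ i, ω x (v i) • e i = -x := by
    intro x
    calc ∑ i, ω x (v i) • e i = rTilde (∑ i, v i ⊗ₜ[ℂ] e i) (ω x) :=
          (rTilde_sum _ _ _ _).symm
      _ = rTilde ((TensorProduct.comm ℂ h h) r) (ω x) := by rw [hcomm]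
      _ = rTilde (-r) (ω x) := by rw [hskewr]
      _ = -x := by rw [rTilde_neg, hinv₁]
  -- the three legs as explicit sums
  have hr12 : r12 r = ∑ i, iU (e i) ⊗ₜ[ℂ]
      (iU (v i) ⊗ₜ[ℂ] (1 : UniversalEnvelopingAlgebra ℂ h)) := by
    simp only [r12]
    conv_lhs => rw [hr]
    rw [map_sum]
    refine Finset.sum_congr rfl fun i _ => ?_
    rw [legMap_tmul, j1_apply, j2_apply]
    simp [Algebra.TensorProduct.tmul_mul_tmul]
  have hr13 : r13 r = ∑ i, iU (e i) ⊗ₜ[ℂ]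
      ((1 : UniversalEnvelopingAlgebra ℂ h) ⊗ₜ[ℂ] iU (v i)) := by
    simp only [r13]
    conv_lhs => rw [hr]
    rw [map_sum]
    refine Finset.sum_congr rfl fun i _ => ?_
    rw [legMap_tmul, j1_apply, j3_apply]
    simp [Algebra.TensorProduct.tmul_mul_tmul]
  have hr23 : r23 r = ∑ i, (1 : UniversalEnvelopingAlgebra ℂ h) ⊗ₜ[ℂ]
      (iU (e i) ⊗ₜ[ℂ] iU (v i)) := by
    simp only [r23]
    conv_lhs => rw [hr]
    rw [map_sum]
    refine Finset.sum_congr rfl fun i _ => ?_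
    rw [legMap_tmul, j2_apply, j3_apply]
    simp [Algebra.TensorProduct.tmul_mul_tmul]
  -- the three brackets as explicit sums
  have hb1 : ⁅r12 r, r13 r⁆ = ∑ i, ∑ j,
      iU ⁅e i, e j⁆ ⊗ₜ[ℂ] (iU (v i) ⊗ₜ[ℂ] iU (v j)) := by
    rw [hr12, hr13]
    refine (ring_sum_lie (A := U3 h) _ _ _).trans ?_
    refine Finset.sum_congr rfl fun i _ => ?_
    refine (ring_lie_sum (A := U3 h) _ _ _).trans ?_
    exact Finset.sum_congr rfl fun j _ => lie12_13 _ _ _ _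
  have hb2 : ⁅r12 r, r23 r⁆ = ∑ i, ∑ j,
      iU (e i) ⊗ₜ[ℂ] (iU ⁅v i, e j⁆ ⊗ₜ[ℂ] iU (v j)) := by
    rw [hr12, hr23]
    refine (ring_sum_lie (A := U3 h) _ _ _).trans ?_
    refine Finset.sum_congr rfl fun i _ => ?_
    refine (ring_lie_sum (A := U3 h) _ _ _).trans ?_
    exact Finset.sum_congr rfl fun j _ => lie12_23 _ _ _ _
  have hb3 : ⁅r13 r, r23 r⁆ = ∑ i, ∑ j,
      iU (e i) ⊗ₜ[ℂ] (iU (e j) ⊗ₜ[ℂ] iU ⁅v i, v j⁆) := by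
    rw [hr13, hr23]
    refine (ring_sum_lie (A := U3 h) _ _ _).trans ?_
    refine Finset.sum_congr rfl fun i _ => ?_
    refine (ring_lie_sum (A := U3 h) _ _ _).trans ?_
    exact Finset.sum_congr rfl fun j _ => lie13_23 _ _ _ _
  rw [hb1, hb2, hb3]
  -- rewrite everything through the map `E := ι ⊗ ι ⊗ ι`
  set E : h ⊗[ℂ] (h ⊗[ℂ] h) →ₗ[ℂ] U3 h :=
    TensorProduct.map iU (TensorProduct.map iU iU) with hE
  set w : _ → _ → h ⊗[ℂ] (h ⊗[ℂ] h) := fun i j =>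
    ⁅e i, e j⁆ ⊗ₜ[ℂ] (v i ⊗ₜ[ℂ] v j) + e i ⊗ₜ[ℂ] (⁅v i, e j⁆ ⊗ₜ[ℂ] v j)
      + e i ⊗ₜ[ℂ] (e j ⊗ₜ[ℂ] ⁅v i, v j⁆) with hw
  have hterm : ∀ i j,
      iU ⁅e i, e j⁆ ⊗ₜ[ℂ] (iU (v i) ⊗ₜ[ℂ] iU (v j))
        + iU (e i) ⊗ₜ[ℂ] (iU ⁅v i, e j⁆ ⊗ₜ[ℂ] iU (v j))
        + iU (e i) ⊗ₜ[ℂ] (iU (e j) ⊗ₜ[ℂ] iU ⁅v i, v j⁆) = E (w i j) := by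
    intro i j
    simp [hE, hw]
  have hW : (∑ i, ∑ j, w i j) = 0 := by
    apply sep
    intro ξ η ζ
    rw [← hinv₂ ξ, ← hinv₂ η, ← hinv₂ ζ]
    set x := rTilde r ξ with hx
    set y := rTilde r η with hy
    set z := rTilde r ζ with hz
    rw [map_sum]
    have expand_inner : ∀ i, Phi (ω x) (ω y) (ω z) (∑ j, w i j)
        = ∑ j, (ω x ⁅e i, e j⁆ * (ω y (v i) * ω z (v j))
          + ω x (e i) * (ω y ⁅v i, e j⁆ * ω z (v j))
          + ω x (e i) * (ω y (e j) * ω z ⁅v i, v j⁆)) := by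
      intro i
      rw [map_sum]
      exact Finset.sum_congr rfl fun j _ => by
        rw [hw]; simp only [map_add, Phi_tmul]
    rw [Finset.sum_congr rfl fun i _ => expand_inner i]
    rw [Finset.sum_comm]
    have step : ∀ j, ∑ i, (ω x ⁅e i, e j⁆ * (ω y (v i) * ω z (v j))
          + ω x (e i) * (ω y ⁅v i, e j⁆ * ω z (v j))
          + ω x (e i) * (ω y (e j) * ω z ⁅v i, v j⁆))
        = ω x ⁅-y, e j⁆ * ω z (v j) + ω y ⁅x, e j⁆ * ω z (v j)
          + ω y (e j) * ω z ⁅x, v j⁆ := by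
      intro j
      rw [Finset.sum_add_distrib, Finset.sum_add_distrib]
      have c1 : ∑ i, ω x ⁅e i, e j⁆ * (ω y (v i) * ω z (v j))
          = ω x ⁅-y, e j⁆ * ω z (v j) := by
        conv_rhs => rw [← h2 y]
        rw [sum_lie', map_sum, Finset.sum_mul]
        exact Finset.sum_congr rfl fun i _ => by
          rw [smul_lie, map_smul, smul_eq_mul]; ring
      have c2 : ∑ i, ω x (e i) * (ω y ⁅v i, e j⁆ * ω z (v j))
          = ω y ⁅x, e j⁆ * ω z (v j) := by
        conv_rhs => rw [← h1 x]
        rw [sum_lie', map_sum, Finset.sum_mul]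
        exact Finset.sum_congr rfl fun i _ => by
          rw [smul_lie, map_smul, smul_eq_mul]; ring
      have c3 : ∑ i, ω x (e i) * (ω y (e j) * ω z ⁅v i, v j⁆)
          = ω y (e j) * ω z ⁅x, v j⁆ := by
        conv_rhs => rw [← h1 x]
        rw [sum_lie', map_sum, Finset.mul_sum]
        exact Finset.sum_congr rfl fun i _ => by
          rw [smul_lie, map_smul, smul_eq_mul]; ring
      rw [c1, c2, c3]
    rw [Finset.sum_congr rfl fun j _ => step j]
    rw [Finset.sum_add_distrib, Finset.sum_add_distrib]
    have d1 : ∑ j, ω x ⁅-y, e j⁆ * ω z (v j) = ω x ⁅-y, -z⁆ := by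
      conv_rhs => rw [← h2 z]
      rw [lie_sum', map_sum]
      exact Finset.sum_congr rfl fun j _ => by
        rw [lie_smul, map_smul, smul_eq_mul]; ring
    have d2 : ∑ j, ω y ⁅x, e j⁆ * ω z (v j) = ω y ⁅x, -z⁆ := by
      conv_rhs => rw [← h2 z]
      rw [lie_sum', map_sum]
      exact Finset.sum_congr rfl fun j _ => by
        rw [lie_smul, map_smul, smul_eq_mul]; ring
    have d3 : ∑ j, ω y (e j) * ω z ⁅x, v j⁆ = ω z ⁅x, y⁆ := by
      conv_rhs => rw [← h1 y]
      rw [lie_sum', map_sum]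
      exact Finset.sum_congr rfl fun j _ => by
        rw [lie_smul, map_smul, smul_eq_mul]
    rw [d1, d2, d3]
    simp only [neg_lie, lie_neg, neg_neg, map_neg, LinearMap.neg_apply]
    have hxz : ω ⁅x, z⁆ y = -ω ⁅z, x⁆ y := by
      rw [← lie_skew z x, map_neg, LinearMap.neg_apply, neg_neg]
    linear_combination (hskewω x ⁅y, z⁆) - (hskewω y ⁅x, z⁆) + (hskewω z ⁅x, y⁆)
      + hxz - hcocycle x y z
  calc (∑ i, ∑ j, iU ⁅e i, e j⁆ ⊗ₜ[ℂ] (iU (v i) ⊗ₜ[ℂ] iU (v j)))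
        + (∑ i, ∑ j, iU (e i) ⊗ₜ[ℂ] (iU ⁅v i, e j⁆ ⊗ₜ[ℂ] iU (v j)))
        + (∑ i, ∑ j, iU (e i) ⊗ₜ[ℂ] (iU (e j) ⊗ₜ[ℂ] iU ⁅v i, v j⁆))
      = ∑ i, ∑ j, E (w i j) := by
        simp only [← Finset.sum_add_distrib]
        exact Finset.sum_congr rfl fun i _ => Finset.sum_congr rfl fun j _ => hterm i j
    _ = E (∑ i, ∑ j, w i j) := by simp only [← map_sum]
    _ = 0 := by rw [hW, map_zero]

end Stmt7
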